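/- Let R be a commutative ring and let J_1, …, J_n, I be ideals of R such that the product J_1 ⋯ J_n is a nil ideal of R. If x ∈ R is such that for every i ∈ {1, …, n} the class x + J_i belongs to the radical of the ideal I·(R/J_i) generated by the image of I in R/J_i, then x ∈ √I. -/
import Mathlib


/-- Let `R` be a commutative ring and `J 1, …, J n, I` ideals of `R` such that
the product `J 1 ⋯ J n` is a nil ideal of `R`. If `x ∈ R` is such that for every `i` the class
of `x` in `R / J i` belongs to the radical of the extension of `I` to `R / J i`, then
`x ∈ √I`. -/
theorem mem_radical_of_forall_quotient_mem_radical
    (R : Type*) [CommRing R] (n : ℕ) (hn : 0 < n)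
    (J : Fin n → Ideal R) (I : Ideal R)
    (hnil : ∀ x ∈ ∏ i, J i, IsNilpotent x)
    (x : R)
    (hx : ∀ i : Fin n,
      Ideal.Quotient.mk (J i) x ∈ (I.map (Ideal.Quotient.mk (J i))).radical) :
    x ∈ I.radical := by
  choose m hm using hx
  have h1 : ∀ i, x ^ m i ∈ I ⊔ J i := by
    intro i
    have h := hm i
    rw [← map_pow] at h
    have h2 : x ^ m i ∈ (I.map (Ideal.Quotient.mk (J i))).comap (Ideal.Quotient.mk (J i)) := h
    rwa [Ideal.comap_map_of_surjective _ Ideal.Quotient.mk_surjective,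
      ← RingHom.ker_eq_comap_bot, Ideal.mk_ker] at h2
  choose a ha b hb hab using fun i => Submodule.mem_sup.mp (h1 i)
  have hprodb : ∏ i, b i ∈ ∏ i, J i := Ideal.prod_mem_prod fun i _ => hb i
  obtain ⟨k, hk⟩ := hnil _ hprodb
  have key : x ^ (∑ i, m i) - ∏ i, b i ∈ I := by
    have hxp : x ^ (∑ i, m i) = ∏ i, (a i + b i) := by
      rw [← Finset.prod_pow_eq_pow_sum]
      exact Finset.prod_congr rfl fun i _ => (hab i).symm
    rw [hxp, Finset.prod_add,
      ← Finset.add_sum_erase _ _ (Finset.empty_mem_powerset _)]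
    simp only [Finset.prod_empty, one_mul, Finset.sdiff_empty]
    rw [add_sub_cancel_left]
    refine Ideal.sum_mem _ fun t ht => ?_
    rw [Finset.mem_erase, Finset.mem_powerset] at ht
    obtain ⟨j, hj⟩ := Finset.nonempty_iff_ne_empty.mpr ht.1
    refine Ideal.mul_mem_right _ _ ?_
    rw [Finset.prod_eq_mul_prod_sdiff_singleton_of_mem hj]
    exact Ideal.mul_mem_right _ _ (ha j)
  refine ⟨(∑ i, m i) * k, ?_⟩
  have hkey : Ideal.Quotient.mk I (x ^ (∑ i, m i)) = Ideal.Quotient.mk I (∏ i, b i) := by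
    rwa [Ideal.Quotient.mk_eq_mk_iff_sub_mem]
  rw [← Ideal.Quotient.eq_zero_iff_mem, pow_mul, map_pow, hkey, ← map_pow, hk, map_zero]
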